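/- arXiv:alg-geom/9712022 — 4 statements merged into one kernel-verified Lean document; each statement's English description precedes it below -/
import Mathlib

section
/- Let v₁ = (r₁, d₁) and v₂ = (r₂, d₂) be vectors in ℤ² with gcd(rᵢ, dᵢ) = 1 for i = 1,2 and det(v₁, v₂) = r₁d₂ - d₁r₂ ≠ 0. Set n = det(v₁, v₂). Then there exists a unique unit α ∈ (ZMod |n|)ˣ such that v₁ ≡ α·v₂ mod n·ℤ², i.e. r₁ ≡ α r₂ and d₁ ≡ α d₂ modulo n. -/
theorem exists_unique_alpha (r₁ d₁ r₂ d₂ : ℤ)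
    (h₁ : Int.gcd r₁ d₁ = 1) (h₂ : Int.gcd r₂ d₂ = 1)
    (n : ℤ) (hn : n = r₁ * d₂ - d₁ * r₂) (hn0 : n ≠ 0) :
    ∃! α : (ZMod n.natAbs)ˣ,
      (r₁ : ZMod n.natAbs) = (α : ZMod n.natAbs) * r₂ ∧
      (d₁ : ZMod n.natAbs) = (α : ZMod n.natAbs) * d₂ := by
  have hcast : (n : ZMod n.natAbs) = 0 := by
    rw [ZMod.intCast_zmod_eq_zero_iff_dvd]
    exact Int.natAbs_dvd.mpr dvd_rfl
  have key : (r₁ : ZMod n.natAbs) * d₂ = (d₁ : ZMod n.natAbs) * r₂ := by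
    have : ((r₁ * d₂ - d₁ * r₂ : ℤ) : ZMod n.natAbs) = 0 := by rw [← hn]; exact hcast
    push_cast at this
    linear_combination this
  -- Bezout for v₂
  have b2 : (r₂ : ZMod n.natAbs) * (Int.gcdA r₂ d₂ : ZMod n.natAbs)
      + (d₂ : ZMod n.natAbs) * (Int.gcdB r₂ d₂ : ZMod n.natAbs) = 1 := by
    have := Int.gcd_eq_gcd_ab r₂ d₂
    rw [h₂] at this
    have h' := congrArg (fun z : ℤ => (z : ZMod n.natAbs)) this
    push_cast at h'
    linear_combination h'.symm
  have b1 : (r₁ : ZMod n.natAbs) * (Int.gcdA r₁ d₁ : ZMod n.natAbs)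
      + (d₁ : ZMod n.natAbs) * (Int.gcdB r₁ d₁ : ZMod n.natAbs) = 1 := by
    have := Int.gcd_eq_gcd_ab r₁ d₁
    rw [h₁] at this
    have h' := congrArg (fun z : ℤ => (z : ZMod n.natAbs)) this
    push_cast at h'
    linear_combination h'.symm
  set x := (Int.gcdA r₂ d₂ : ZMod n.natAbs)
  set y := (Int.gcdB r₂ d₂ : ZMod n.natAbs)
  set u := (Int.gcdA r₁ d₁ : ZMod n.natAbs)
  set v := (Int.gcdB r₁ d₁ : ZMod n.natAbs)
  set a : ZMod n.natAbs := x * r₁ + y * d₁ with ha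
  set b : ZMod n.natAbs := u * r₂ + v * d₂ with hb
  have har : a * r₂ = r₁ := by
    rw [ha]; linear_combination (-y) * key + r₁ * b2
  have had : a * d₂ = d₁ := by
    rw [ha]; linear_combination x * key + d₁ * b2
  have hbr : b * r₁ = r₂ := by
    rw [hb]; linear_combination v * key + r₂ * b1
  have hbd : b * d₁ = d₂ := by
    rw [hb]; linear_combination (-u) * key + d₂ * b1
  have hab : a * b = 1 := by
    have h1 : a * b * r₂ = r₂ := by rw [mul_comm a b, mul_assoc, har, hbr]
    have h2 : a * b * d₂ = d₂ := by rw [mul_comm a b, mul_assoc, had, hbd]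
    calc a * b = a * b * (r₂ * x + d₂ * y) := by rw [b2, mul_one]
    _ = (a * b * r₂) * x + (a * b * d₂) * y := by ring
    _ = r₂ * x + d₂ * y := by rw [h1, h2]
    _ = 1 := b2
  refine ⟨⟨a, b, hab, by rw [mul_comm]; exact hab⟩, ⟨har.symm, had.symm⟩, ?_⟩
  rintro β ⟨hβr, hβd⟩
  ext
  show (β : ZMod n.natAbs) = a
  calc (β : ZMod n.natAbs) = β * (r₂ * x + d₂ * y) := by rw [b2, mul_one]
  _ = (β * r₂) * x + (β * d₂) * y := by ring
  _ = r₁ * x + d₁ * y := by rw [← hβr, ← hβd]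
  _ = a := by rw [ha]; ring
end

section
/- Let v₁, v₂ be primitive vectors in ℤ² with n = det(v₁, v₂) ≠ 0, and let α(v₁,v₂) ∈ (ZMod |n|)ˣ be the unique unit with v₁ ≡ α v₂ mod n. Then for any A ∈ SL₂(ℤ), det(Av₁, Av₂) = det(v₁, v₂) and α(Av₁, Av₂) = α(v₁, v₂). -/
theorem det_alpha_SL2_invariant (v₁ v₂ : Fin 2 → ℤ)
    (h₁ : Int.gcd (v₁ 0) (v₁ 1) = 1) (h₂ : Int.gcd (v₂ 0) (v₂ 1) = 1)
    (n : ℤ) (hn : n = v₁ 0 * v₂ 1 - v₁ 1 * v₂ 0) (hn0 : n ≠ 0)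
    (A : Matrix.SpecialLinearGroup (Fin 2) ℤ) :
    ((A : Matrix (Fin 2) (Fin 2) ℤ).mulVec v₁ 0 * (A : Matrix (Fin 2) (Fin 2) ℤ).mulVec v₂ 1 -
      (A : Matrix (Fin 2) (Fin 2) ℤ).mulVec v₁ 1 * (A : Matrix (Fin 2) (Fin 2) ℤ).mulVec v₂ 0 = n) ∧
    ∀ α : (ZMod n.natAbs)ˣ,
      ((v₁ 0 : ZMod n.natAbs) = (α : ZMod n.natAbs) * v₂ 0 ∧
       (v₁ 1 : ZMod n.natAbs) = (α : ZMod n.natAbs) * v₂ 1) →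
      (((A : Matrix (Fin 2) (Fin 2) ℤ).mulVec v₁ 0 : ZMod n.natAbs) =
          (α : ZMod n.natAbs) * ((A : Matrix (Fin 2) (Fin 2) ℤ).mulVec v₂ 0) ∧
       ((A : Matrix (Fin 2) (Fin 2) ℤ).mulVec v₁ 1 : ZMod n.natAbs) =
          (α : ZMod n.natAbs) * ((A : Matrix (Fin 2) (Fin 2) ℤ).mulVec v₂ 1)) := by
  have hdet : ((A : Matrix (Fin 2) (Fin 2) ℤ)).det = 1 := A.2
  rw [Matrix.det_fin_two] at hdet
  simp only [Matrix.mulVec, dotProduct, Fin.sum_univ_two]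
  constructor
  · rw [hn]; linear_combination (v₁ 0 * v₂ 1 - v₁ 1 * v₂ 0) * hdet
  · rintro α ⟨hα0, hα1⟩
    constructor <;>
    · push_cast
      rw [hα0, hα1]; ring
end

section
/- Let v₁, v₂ and w₁, w₂ be two pairs of primitive vectors in ℤ² with det(v₁,v₂) = det(w₁,w₂) = n ≠ 0 and α(v₁,v₂) = α(w₁,w₂). Then there exists A ∈ SL₂(ℤ) with A v₁ = w₁ and A v₂ = w₂. That is, the pair (det, α) is a complete invariant for the SL₂(ℤ)-action on pairs of primitive vectors with nonzero determinant. -/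
theorem det_alpha_complete_invariant (v₁ v₂ w₁ w₂ : Fin 2 → ℤ)
    (hv₁ : Int.gcd (v₁ 0) (v₁ 1) = 1) (hv₂ : Int.gcd (v₂ 0) (v₂ 1) = 1)
    (hw₁ : Int.gcd (w₁ 0) (w₁ 1) = 1) (hw₂ : Int.gcd (w₂ 0) (w₂ 1) = 1)
    (n : ℤ) (hn0 : n ≠ 0)
    (hdv : v₁ 0 * v₂ 1 - v₁ 1 * v₂ 0 = n)
    (hdw : w₁ 0 * w₂ 1 - w₁ 1 * w₂ 0 = n)
    (α : (ZMod n.natAbs)ˣ)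
    (hαv : (v₁ 0 : ZMod n.natAbs) = (α : ZMod n.natAbs) * v₂ 0 ∧
           (v₁ 1 : ZMod n.natAbs) = (α : ZMod n.natAbs) * v₂ 1)
    (hαw : (w₁ 0 : ZMod n.natAbs) = (α : ZMod n.natAbs) * w₂ 0 ∧
           (w₁ 1 : ZMod n.natAbs) = (α : ZMod n.natAbs) * w₂ 1) :
    ∃ A : Matrix.SpecialLinearGroup (Fin 2) ℤ,
      (A : Matrix (Fin 2) (Fin 2) ℤ).mulVec v₁ = w₁ ∧
      (A : Matrix (Fin 2) (Fin 2) ℤ).mulVec v₂ = w₂ := by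
  have dvd_of_zmod : ∀ m : ℤ, ((m : ZMod n.natAbs) = 0) → n ∣ m := by
    intro m hm
    exact Int.natAbs_dvd.mp ((ZMod.intCast_zmod_eq_zero_iff_dvd m n.natAbs).mp hm)
  have d1 : n ∣ w₁ 0 * v₂ 1 - w₂ 0 * v₁ 1 := by
    apply dvd_of_zmod; push_cast; rw [hαv.2, hαw.1]; ring
  have d2 : n ∣ w₂ 0 * v₁ 0 - w₁ 0 * v₂ 0 := by
    apply dvd_of_zmod; push_cast; rw [hαv.1, hαw.1]; ring
  have d3 : n ∣ w₁ 1 * v₂ 1 - w₂ 1 * v₁ 1 := by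
    apply dvd_of_zmod; push_cast; rw [hαv.2, hαw.2]; ring
  have d4 : n ∣ w₂ 1 * v₁ 0 - w₁ 1 * v₂ 0 := by
    apply dvd_of_zmod; push_cast; rw [hαv.1, hαw.2]; ring
  obtain ⟨a, ha⟩ := d1
  obtain ⟨b, hb⟩ := d2
  obtain ⟨c, hc⟩ := d3
  obtain ⟨d, hd⟩ := d4
  have hdet : a * d - b * c = 1 := by
    have key : n * n * (a * d - b * c) = n * n * 1 := by
      linear_combination (v₁ 0 * v₂ 1 - v₁ 1 * v₂ 0) * hdw + n * hdv
        - (w₂ 1 * v₁ 0 - w₁ 1 * v₂ 0) * ha - (n * a) * hd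
        + (w₁ 1 * v₂ 1 - w₂ 1 * v₁ 1) * hb + (n * b) * hc
    exact mul_left_cancel₀ (mul_ne_zero hn0 hn0) key
  refine ⟨⟨!![a, b; c, d], by simp [Matrix.det_fin_two_of]; linarith⟩, ?_, ?_⟩
  · funext i
    fin_cases i <;> simp [Matrix.mulVec, dotProduct, Fin.sum_univ_two]
    · exact mul_left_cancel₀ hn0 (by linear_combination (-(v₁ 0)) * ha - v₁ 1 * hb + w₁ 0 * hdv)
    · exact mul_left_cancel₀ hn0 (by linear_combination (-(v₁ 0)) * hc - v₁ 1 * hd + w₁ 1 * hdv)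
  · funext i
    fin_cases i <;> simp [Matrix.mulVec, dotProduct, Fin.sum_univ_two]
    · exact mul_left_cancel₀ hn0 (by linear_combination (-(v₂ 0)) * ha - v₂ 1 * hb + w₂ 0 * hdv)
    · exact mul_left_cancel₀ hn0 (by linear_combination (-(v₂ 0)) * hc - v₂ 1 * hd + w₂ 1 * hdv)
end

section
/- Let g be a Lie algebra acting on a vector space V, t = Σᵢ xᵢ⊗yᵢ ∈ g⊗g a symmetric invariant tensor with t_*(v⊗v) = Σᵢ(xᵢ·v)⊗(yᵢ·v) = 0 for all v ∈ V. Then for any φ₁, φ₂, φ₃ ∈ V* and v ∈ V, one has Σ_{i,j} φ₁([xᵢ,xⱼ]·v) φ₂(yᵢ·v) φ₃(yⱼ·v) = 0; i.e. ⟨d_v*φ₁, d_v*φ₂, d_v*φ₃⟩_t = 0 where d_v*φ(A) = φ(A·v). -/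
open TensorProduct

private lemma aux_pair {k V ι : Type*} [Field k] [AddCommGroup V] [Module k V] [Fintype ι]
    (f g : V →ₗ[k] k) (a b : ι → V) (h : (∑ i, a i ⊗ₜ[k] b i) = (0 : V ⊗[k] V)) :
    ∑ i, f (a i) * g (b i) = 0 := by
  have h2 := congrArg (TensorProduct.lift ((LinearMap.mul k k).compl₁₂ f g)) h
  simpa using h2

theorem triple_bracket_vanishes_on_dv
    (k : Type*) [Field k]
    (g : Type*) [LieRing g] [LieAlgebra k g]
    (V : Type*) [AddCommGroup V] [Module k V] [LieRingModule g V] [LieModule k g V]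
    (ι : Type*) [Fintype ι] (x y : ι → g)
    (hsym : (∑ i, x i ⊗ₜ[k] y i) = ∑ i, y i ⊗ₜ[k] x i)
    (hinv : ∀ a : g, (∑ i, (⁅a, x i⁆ ⊗ₜ[k] y i + x i ⊗ₜ[k] ⁅a, y i⁆)) = (0 : g ⊗[k] g))
    (ht : ∀ v : V, (∑ i, (⁅x i, v⁆ ⊗ₜ[k] ⁅y i, v⁆)) = (0 : V ⊗[k] V)) :
    ∀ (φ₁ φ₂ φ₃ : V →ₗ[k] k) (v : V),
      (∑ i, ∑ j, φ₁ ⁅⁅x i, x j⁆, v⁆ * φ₂ ⁅y i, v⁆ * φ₃ ⁅y j, v⁆) = 0 := by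
  intro φ₁ φ₂ φ₃ v
  -- polarized version of ht
  have hpol : ∀ w : V,
      (∑ i, (⁅x i, v⁆ ⊗ₜ[k] ⁅y i, w⁆ + ⁅x i, w⁆ ⊗ₜ[k] ⁅y i, v⁆)) = (0 : V ⊗[k] V) := by
    intro w
    have key : (∑ i, (⁅x i, v⁆ ⊗ₜ[k] ⁅y i, w⁆ + ⁅x i, w⁆ ⊗ₜ[k] ⁅y i, v⁆))
        = (∑ i, ⁅x i, v + w⁆ ⊗ₜ[k] ⁅y i, v + w⁆)
          - (∑ i, ⁅x i, v⁆ ⊗ₜ[k] ⁅y i, v⁆) - (∑ i, ⁅x i, w⁆ ⊗ₜ[k] ⁅y i, w⁆) := by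
      rw [← Finset.sum_sub_distrib, ← Finset.sum_sub_distrib]
      refine Finset.sum_congr rfl fun i _ => ?_
      simp only [lie_add, tmul_add, add_tmul]
      abel
    rw [key, ht, ht, ht]
    simp
  -- scalar polarization
  have hA : ∀ (f g' : V →ₗ[k] k) (w : V),
      ∑ i, f ⁅x i, w⁆ * g' ⁅y i, v⁆ = - ∑ i, f ⁅x i, v⁆ * g' ⁅y i, w⁆ := by
    intro f g' w
    have h2 := congrArg (TensorProduct.lift ((LinearMap.mul k k).compl₁₂ f g')) (hpol w)
    simp only [map_sum, map_add, TensorProduct.lift.tmul, LinearMap.compl₁₂_apply,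
      LinearMap.mul_apply', map_zero] at h2
    rw [Finset.sum_add_distrib] at h2
    linear_combination h2
  have hzero : ∀ (f g' : V →ₗ[k] k), ∑ i, f ⁅x i, v⁆ * g' ⁅y i, v⁆ = 0 :=
    fun f g' => aux_pair f g' _ _ (ht v)
  have step : (∑ i, ∑ j, φ₁ ⁅⁅x i, x j⁆, v⁆ * φ₂ ⁅y i, v⁆ * φ₃ ⁅y j, v⁆)
      = (∑ i, ∑ j, φ₁ ⁅x i, ⁅x j, v⁆⁆ * φ₂ ⁅y i, v⁆ * φ₃ ⁅y j, v⁆)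
        - (∑ i, ∑ j, φ₁ ⁅x j, ⁅x i, v⁆⁆ * φ₂ ⁅y i, v⁆ * φ₃ ⁅y j, v⁆) := by
    rw [← Finset.sum_sub_distrib]
    refine Finset.sum_congr rfl fun i _ => ?_
    rw [← Finset.sum_sub_distrib]
    refine Finset.sum_congr rfl fun j _ => ?_
    rw [lie_lie, map_sub, sub_mul, sub_mul]
  have partB : (∑ i, ∑ j, φ₁ ⁅x j, ⁅x i, v⁆⁆ * φ₂ ⁅y i, v⁆ * φ₃ ⁅y j, v⁆) = 0 := by
    rw [Finset.sum_comm]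
    refine Finset.sum_eq_zero fun j _ => ?_
    rw [← Finset.sum_mul]
    have : ∑ i, φ₁ ⁅x j, ⁅x i, v⁆⁆ * φ₂ ⁅y i, v⁆ = 0 := by
      have := hzero (φ₁ ∘ₗ LieModule.toEnd k g V (x j)) φ₂
      simpa using this
    rw [this, zero_mul]
  have partA : (∑ i, ∑ j, φ₁ ⁅x i, ⁅x j, v⁆⁆ * φ₂ ⁅y i, v⁆ * φ₃ ⁅y j, v⁆) = 0 := by
    rw [Finset.sum_comm]
    have inner : ∀ j, ∑ i, φ₁ ⁅x i, ⁅x j, v⁆⁆ * φ₂ ⁅y i, v⁆ * φ₃ ⁅y j, v⁆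
        = (- ∑ i, φ₁ ⁅x i, v⁆ * φ₂ ⁅y i, ⁅x j, v⁆⁆) * φ₃ ⁅y j, v⁆ := by
      intro j
      rw [← Finset.sum_mul, hA φ₁ φ₂ ⁅x j, v⁆]
    calc (∑ j, ∑ i, φ₁ ⁅x i, ⁅x j, v⁆⁆ * φ₂ ⁅y i, v⁆ * φ₃ ⁅y j, v⁆)
        = ∑ j, (- ∑ i, φ₁ ⁅x i, v⁆ * φ₂ ⁅y i, ⁅x j, v⁆⁆) * φ₃ ⁅y j, v⁆ :=
          Finset.sum_congr rfl fun j _ => inner j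
      _ = - ∑ i, φ₁ ⁅x i, v⁆ * ∑ j, φ₂ ⁅y i, ⁅x j, v⁆⁆ * φ₃ ⁅y j, v⁆ := by
          have h1 : ∀ j, (- ∑ i, φ₁ ⁅x i, v⁆ * φ₂ ⁅y i, ⁅x j, v⁆⁆) * φ₃ ⁅y j, v⁆
              = ∑ i, -(φ₁ ⁅x i, v⁆ * φ₂ ⁅y i, ⁅x j, v⁆⁆ * φ₃ ⁅y j, v⁆) := by
            intro j
            rw [neg_mul, Finset.sum_mul, ← Finset.sum_neg_distrib]
          rw [Finset.sum_congr rfl fun j _ => h1 j, Finset.sum_comm,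
            ← Finset.sum_neg_distrib]
          refine Finset.sum_congr rfl fun i _ => ?_
          rw [Finset.mul_sum, ← Finset.sum_neg_distrib]
          refine Finset.sum_congr rfl fun j _ => ?_
          ring
      _ = 0 := by
          refine neg_eq_zero.mpr (Finset.sum_eq_zero fun i _ => ?_)
          have : ∑ j, φ₂ ⁅y i, ⁅x j, v⁆⁆ * φ₃ ⁅y j, v⁆ = 0 := by
            have := hzero (φ₂ ∘ₗ LieModule.toEnd k g V (y i)) φ₃
            simpa using this
          rw [this, mul_zero]
  rw [step, partA, partB, sub_zero]
end
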